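/- Let (w(i)) be a unit jet in ℝ^S framed by (w_1,…,w_ℓ) that is adapted to a reaction network G (for each reaction (y,y'), the sign of ⟨w(i), y'−y⟩ is the same for all i: always zero, always negative, or always positive). Then a reaction (y,y') is (w_1,…,w_ℓ)-sustaining (its level λ, the least j with ⟨w_j, y'−y⟩ ≠ 0, exists and satisfies ⟨w_λ, y'−y⟩ < 0) if and only if ⟨w(i), y'−y⟩ < 0 for all i; and similarly it is (w_1,…,w_ℓ)-draining (⟨w_λ, y'−y⟩ > 0) if and only if ⟨w(i), y'−y⟩ > 0 for all i. -/

import Mathlib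

open Filter Finset

/-- The standard dot product on `Fin n → ℝ`. -/
def dotp {n : ℕ} (w x : Fin n → ℝ) : ℝ := ∑ i, w i * x i

lemma dotp_sum_smul {n : ℕ} (s : Finset ℕ) (a : ℕ → ℝ) (w : ℕ → Fin n → ℝ) (x : Fin n → ℝ) :
    dotp (∑ j ∈ s, a j • w j) x = ∑ j ∈ s, a j * dotp (w j) x := by
  simp only [dotp, Finset.sum_apply, Pi.smul_apply, smul_eq_mul, Finset.sum_mul,
    Finset.mul_sum]
  rw [Finset.sum_comm]
  refine Finset.sum_congr rfl fun j _ => Finset.sum_congr rfl fun i _ => by ring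

lemma ratio_tendsto (ℓ : ℕ) (β : ℕ → ℕ → ℝ)
    (hβpos : ∀ i j, 1 ≤ j → j ≤ ℓ → 0 < β i j)
    (hratio : ∀ j, 1 ≤ j → j < ℓ → Tendsto (fun i => β i j / β i (j + 1)) atTop atTop)
    (lam : ℕ) (hlam : 1 ≤ lam) :
    ∀ j, lam ≤ j → j ≤ ℓ →
      Tendsto (fun i => β i j / β i lam) atTop (nhds (if j = lam then 1 else 0)) := by
  intro j hj
  induction j, hj using Nat.le_induction with
  | base =>
    intro hjℓ
    simp only [if_pos rfl]
    have : (fun i => β i lam / β i lam) = fun _ => (1 : ℝ) := by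
      funext i
      exact div_self (ne_of_gt (hβpos i lam hlam hjℓ))
    rw [this]; exact tendsto_const_nhds
  | succ j hj ih =>
    intro hjℓ
    have hjℓ' : j ≤ ℓ := le_trans (Nat.le_succ j) hjℓ
    have hj1 : 1 ≤ j := le_trans hlam hj
    have hne : j + 1 ≠ lam := by omega
    simp only [if_neg hne]
    have h0 : Tendsto (fun i => β i (j + 1) / β i j) atTop (nhds 0) := by
      have := (hratio j hj1 (by omega)).inv_tendsto_atTop
      exact this.congr fun i => by rw [Pi.inv_apply, inv_div]
    have hmul := h0.mul (ih hjℓ')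
    rw [zero_mul] at hmul
    have heq : (fun i => β i (j + 1) / β i j * (β i j / β i lam)) =
        fun i => β i (j + 1) / β i lam := by
      funext i
      rw [div_mul_div_comm, mul_comm (β i (j+1)) (β i j),
        mul_div_mul_left _ _ (ne_of_gt (hβpos i j hj1 hjℓ'))]
    rwa [heq] at hmul

theorem sustaining_draining_frame_iff_jet {n ℓ : ℕ} (hℓ : 0 < ℓ)
    (w : ℕ → Fin n → ℝ)
    (hw1 : ∀ j, 1 ≤ j → j ≤ ℓ → ∑ i, w j i ^ 2 = 1)
    (hw2 : ∀ j j', 1 ≤ j → j ≤ ℓ → 1 ≤ j' → j' ≤ ℓ → j ≠ j' → dotp (w j) (w j') = 0)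
    (β : ℕ → ℕ → ℝ)
    (v : ℕ → Fin n → ℝ)
    (hv : ∀ i, v i = ∑ j ∈ Finset.Icc 1 ℓ, β i j • w j)
    (hunit : ∀ i, ∑ c, v i c ^ 2 = 1)
    (hβpos : ∀ i j, 1 ≤ j → j ≤ ℓ → 0 < β i j)
    (hratio : ∀ j, 1 ≤ j → j < ℓ → Tendsto (fun i => β i j / β i (j + 1)) atTop atTop)
    (reactions : Finset ((Fin n → ℝ) × (Fin n → ℝ)))
    (hadapted : ∀ r ∈ reactions,
      (∀ i, dotp (v i) (r.2 - r.1) = 0) ∨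
      (∀ i, dotp (v i) (r.2 - r.1) < 0) ∨
      (∀ i, 0 < dotp (v i) (r.2 - r.1)))
    (y y' : Fin n → ℝ) (hr : (y, y') ∈ reactions) :
    ((∃ lam, 1 ≤ lam ∧ lam ≤ ℓ ∧ dotp (w lam) (y' - y) < 0 ∧
        ∀ j, 1 ≤ j → j < lam → dotp (w j) (y' - y) = 0) ↔
      ∀ i, dotp (v i) (y' - y) < 0) ∧
    ((∃ lam, 1 ≤ lam ∧ lam ≤ ℓ ∧ 0 < dotp (w lam) (y' - y) ∧
        ∀ j, 1 ≤ j → j < lam → dotp (w j) (y' - y) = 0) ↔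
      ∀ i, 0 < dotp (v i) (y' - y)) := by
  set x := y' - y with hx
  set c : ℕ → ℝ := fun j => dotp (w j) x with hc
  set d : ℕ → ℝ := fun i => dotp (v i) x with hd
  have hdsum : ∀ i, d i = ∑ j ∈ Finset.Icc 1 ℓ, β i j * c j := by
    intro i
    simp only [hd, hv i, dotp_sum_smul]
    rfl
  -- key limit
  have main : ∀ lam, 1 ≤ lam → lam ≤ ℓ → (∀ j, 1 ≤ j → j < lam → c j = 0) →
      Tendsto (fun i => d i / β i lam) atTop (nhds (c lam)) := by
    intro lam h1 h2 h0
    have hsum : ∀ i, d i = ∑ j ∈ Finset.Icc lam ℓ, β i j * c j := by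
      intro i
      rw [hdsum i]
      rw [show Finset.Icc 1 ℓ = Finset.Icc 1 (lam - 1) ∪ Finset.Icc lam ℓ by
        ext j; simp only [Finset.mem_union, Finset.mem_Icc]; omega]
      rw [Finset.sum_union (by
        rw [Finset.disjoint_left]; intro j hj hj'
        simp only [Finset.mem_Icc] at hj hj'; omega)]
      have : ∑ j ∈ Finset.Icc 1 (lam - 1), β i j * c j = 0 := by
        apply Finset.sum_eq_zero
        intro j hj
        simp only [Finset.mem_Icc] at hj
        rw [h0 j hj.1 (by omega), mul_zero]
      rw [this, zero_add]
    have hdiv : ∀ i, d i / β i lam = ∑ j ∈ Finset.Icc lam ℓ, (β i j / β i lam) * c j := by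
      intro i
      rw [hsum i, Finset.sum_div]
      exact Finset.sum_congr rfl fun j _ => by ring
    have hlim : Tendsto (fun i => ∑ j ∈ Finset.Icc lam ℓ, (β i j / β i lam) * c j) atTop
        (nhds (∑ j ∈ Finset.Icc lam ℓ, (if j = lam then (1:ℝ) else 0) * c j)) := by
      apply tendsto_finset_sum
      intro j hj
      simp only [Finset.mem_Icc] at hj
      exact (ratio_tendsto ℓ β hβpos hratio lam h1 j hj.1 hj.2).mul tendsto_const_nhds
    have hval : ∑ j ∈ Finset.Icc lam ℓ, (if j = lam then (1:ℝ) else 0) * c j = c lam := by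
      rw [Finset.sum_eq_single lam]
      · simp
      · intro j _ hne; simp [hne]
      · intro h; exact absurd (Finset.mem_Icc.mpr ⟨le_refl lam, h2⟩) h
    rw [hval] at hlim
    simpa only [← hdiv] using hlim
  -- if c lam < 0 at a level, some d i < 0
  have neg_exists : ∀ lam, 1 ≤ lam → lam ≤ ℓ → (∀ j, 1 ≤ j → j < lam → c j = 0) →
      c lam < 0 → ∃ i, d i < 0 := by
    intro lam h1 h2 h0 hneg
    have := (main lam h1 h2 h0).eventually_lt_const hneg
    obtain ⟨i, hi⟩ := this.exists
    refine ⟨i, ?_⟩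
    have hβ := hβpos i lam h1 h2
    by_contra h
    push_neg at h
    exact absurd (div_nonneg h hβ.le) (not_le.mpr hi)
  have pos_exists : ∀ lam, 1 ≤ lam → lam ≤ ℓ → (∀ j, 1 ≤ j → j < lam → c j = 0) →
      0 < c lam → ∃ i, 0 < d i := by
    intro lam h1 h2 h0 hpos
    have := (main lam h1 h2 h0).eventually_const_lt hpos
    obtain ⟨i, hi⟩ := this.exists
    refine ⟨i, ?_⟩
    have hβ := hβpos i lam h1 h2
    by_contra h
    push_neg at h
    exact absurd (div_nonpos_of_nonpos_of_nonneg h hβ.le) (not_le.mpr hi)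
  have hadapt := hadapted (y, y') hr
  simp only [← hx, ← hd] at hadapt
  -- existence of a level from a nonzero d
  have find_level : (∃ i, d i ≠ 0) → ∃ lam, 1 ≤ lam ∧ lam ≤ ℓ ∧ c lam ≠ 0 ∧
      ∀ j, 1 ≤ j → j < lam → c j = 0 := by
    rintro ⟨i, hi⟩
    have hne : ∃ j, 1 ≤ j ∧ j ≤ ℓ ∧ c j ≠ 0 := by
      by_contra h
      push_neg at h
      apply hi
      rw [hdsum i]
      apply Finset.sum_eq_zero
      intro j hj
      simp only [Finset.mem_Icc] at hj
      rw [h j hj.1 hj.2, mul_zero]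
    classical
    obtain ⟨j0, hj0⟩ := hne
    let P : ℕ → Prop := fun j => 1 ≤ j ∧ j ≤ ℓ ∧ c j ≠ 0
    have hP : ∃ j, P j := ⟨j0, hj0⟩
    obtain ⟨h1, h2, h3⟩ := Nat.find_spec hP
    refine ⟨Nat.find hP, h1, h2, h3, ?_⟩
    intro j hj1 hjlt
    by_contra hcj
    exact Nat.find_min hP hjlt ⟨hj1, le_trans (le_of_lt hjlt) h2, hcj⟩
  constructor
  · constructor
    · rintro ⟨lam, h1, h2, hneg, h0⟩
      obtain ⟨i0, hi0⟩ := neg_exists lam h1 h2 h0 hneg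
      rcases hadapt with hz | hn | hp
      · exact absurd (hz i0) (ne_of_lt hi0)
      · exact hn
      · exact absurd (hp i0) (not_lt.mpr hi0.le)
    · intro hall
      obtain ⟨lam, h1, h2, hne, h0⟩ := find_level ⟨0, ne_of_lt (hall 0)⟩
      refine ⟨lam, h1, h2, ?_, h0⟩
      rcases lt_or_gt_of_ne hne with h | h
      · exact h
      · obtain ⟨i0, hi0⟩ := pos_exists lam h1 h2 h0 h
        exact absurd (hall i0) (not_lt.mpr hi0.le)
  · constructor
    · rintro ⟨lam, h1, h2, hpos, h0⟩
      obtain ⟨i0, hi0⟩ := pos_exists lam h1 h2 h0 hpos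
      rcases hadapt with hz | hn | hp
      · exact absurd (hz i0) (ne_of_gt hi0)
      · exact absurd (hn i0) (not_lt.mpr hi0.le)
      · exact hp
    · intro hall
      obtain ⟨lam, h1, h2, hne, h0⟩ := find_level ⟨0, ne_of_gt (hall 0)⟩
      refine ⟨lam, h1, h2, ?_, h0⟩
      rcases lt_or_gt_of_ne hne with h | h
      · obtain ⟨i0, hi0⟩ := neg_exists lam h1 h2 h0 h
        exact absurd (hall i0) (not_lt.mpr hi0.le)
      · exact h
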